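/- Ball locality of matrix powers: if x, x' : n → R satisfy x v = x' v for every vertex v that is reachable from u in G_A with dist_{G_A}(u,v) ≤ p, then ((A^p) *ᵥ x) u = ((A^p) *ᵥ x') u; i.e., the u-th entry of A^p x depends only on the entries of x in the ball of radius p around u. -/

import Mathlib

open Matrix

/-- The adjacency graph `G_A` of a symmetric square matrix `A`:
vertices are the indices, and `u` is adjacent to `v` iff `u ≠ v` and `A u v ≠ 0`. -/
def Matrix.adjGraph {R : Type*} [CommRing R] {n : Type*}
    (A : Matrix n n R) (hA : Aᵀ = A) : SimpleGraph n where
  Adj u v := u ≠ v ∧ A u v ≠ 0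
  symm := ⟨by
    intro u v h
    refine ⟨h.1.symm, fun hz => h.2 ?_⟩
    rw [← hA, Matrix.transpose_apply]
    exact hz⟩
  loopless := ⟨fun u h => h.1 rfl⟩

/-- **Ball locality of matrix powers.**
Let `A` be a symmetric square matrix with adjacency graph `G_A`. If two vectors `x` and
`x'` agree on every vertex `v` reachable from `u` in `G_A` with `dist u v ≤ p`, then the
`u`-th entries of `A^p *ᵥ x` and `A^p *ᵥ x'` coincide: the `u`-th entry of `A^p x`
depends only on the entries of `x` in the ball of radius `p` around `u`. -/
theorem matrix_power_ball_locality
    {R : Type*} [CommRing R] {n : Type*} [Fintype n] [DecidableEq n]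
    (A : Matrix n n R) (hA : Aᵀ = A)
    (u : n) (p : ℕ) (x x' : n → R)
    (hxx : ∀ v : n, (A.adjGraph hA).Reachable u v →
      (A.adjGraph hA).dist u v ≤ p → x v = x' v) :
    (A ^ p).mulVec x u = (A ^ p).mulVec x' u := by
  induction p generalizing u with
  | zero =>
      simp only [pow_zero, Matrix.one_mulVec]
      exact hxx u (SimpleGraph.Reachable.refl u) (by simp [SimpleGraph.dist_self])
  | succ p ih =>
      rw [pow_succ', ← Matrix.mulVec_mulVec, ← Matrix.mulVec_mulVec]
      simp only [Matrix.mulVec, dotProduct]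
      refine Finset.sum_congr rfl fun w _ => ?_
      by_cases hAuw : A u w = 0
      · simp [hAuw]
      · congr 1
        apply ih w
        intro v hreach hdist
        rcases eq_or_ne u w with rfl | hne
        · exact hxx v hreach (hdist.trans (Nat.le_succ p))
        · have hadj : (A.adjGraph hA).Adj u w := ⟨hne, hAuw⟩
          have hruv : (A.adjGraph hA).Reachable u v := hadj.reachable.trans hreach
          apply hxx v hruv
          obtain ⟨q, hq⟩ := hreach.exists_walk_length_eq_dist
          have := SimpleGraph.dist_le (SimpleGraph.Walk.cons hadj q)
          simp [SimpleGraph.Walk.length_cons, hq] at this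
          omega
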